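/- Let n ≥ 1, let M assign to each subset b of {1,…,n} a probability measure M(b) on a common measurable space and to each set b ∪ {0} a probability measure M(b ∪ {0}) on the same space, let p ∈ [0,1], and let f : [0,1] → [0,1] be a convex function such that T(M(b), M(b ∪ {0}))(α) ≥ f(α) for every subset b of {1,…,n} and every α ∈ [0,1]. Define the Poisson-subsampled output distributions μ = Σ_{b ⊆ {1,…,n}} p^{|b|}(1−p)^{n−|b|}·M(b) and μ' = Σ_{b ⊆ {1,…,n}} p^{|b|}(1−p)^{n−|b|}·( p·M(b ∪ {0}) + (1−p)·M(b) ). Then for every α ∈ [0,1], T(μ, μ')(α) ≥ p·f(α) + (1−p)·(1−α). -/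

import Mathlib

open MeasureTheory Filter Set

/-- The trade-off function `T(P,Q)` of two measures. -/
noncomputable def tradeOff {Ω : Type*} [MeasurableSpace Ω] (P Q : Measure Ω) (α : ℝ) : ℝ :=
  sInf {β : ℝ | ∃ φ : Ω → ℝ, Measurable φ ∧ (∀ x, φ x ∈ Set.Icc (0:ℝ) 1) ∧
    (∫ x, φ x ∂P) ≤ α ∧ β = 1 - ∫ x, φ x ∂Q}

/-- `{1,…,n}` is modeled as the nonzero elements of `Fin (n+1)`; the embedding of a subset
`b ⊆ {1,…,n}` (a `Finset (Fin n)`) into `Fin (n+1)` is by `Fin.succ`. -/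
def liftSubset (n : ℕ) (b : Finset (Fin n)) : Finset (Fin (n + 1)) :=
  b.map ⟨Fin.succ, Fin.succ_injective n⟩

section Aux

variable {Ω : Type*} [MeasurableSpace Ω]

lemma aux_integrable (ν : Measure Ω) [IsFiniteMeasure ν] {φ : Ω → ℝ}
    (hφ : Measurable φ) (h01 : ∀ x, φ x ∈ Set.Icc (0:ℝ) 1) : Integrable φ ν :=
  (integrable_const (1:ℝ)).mono' hφ.aestronglyMeasurable (Filter.Eventually.of_forall fun x => by
    rw [Real.norm_eq_abs, abs_le]
    exact ⟨by linarith [(h01 x).1], (h01 x).2⟩)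

lemma aux_int_mem (ν : Measure Ω) [IsProbabilityMeasure ν] {φ : Ω → ℝ}
    (hφ : Measurable φ) (h01 : ∀ x, φ x ∈ Set.Icc (0:ℝ) 1) :
    (∫ x, φ x ∂ν) ∈ Set.Icc (0:ℝ) 1 := by
  constructor
  · exact integral_nonneg fun x => (h01 x).1
  · calc ∫ x, φ x ∂ν ≤ ∫ _x, (1:ℝ) ∂ν :=
        integral_mono (aux_integrable ν hφ h01) (integrable_const 1) fun x => (h01 x).2
    _ = 1 := by simp

lemma tradeOff_le (P Q : Measure Ω) [IsProbabilityMeasure Q] {φ : Ω → ℝ}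
    (hφ : Measurable φ) (h01 : ∀ x, φ x ∈ Set.Icc (0:ℝ) 1) {α : ℝ}
    (hα : (∫ x, φ x ∂P) ≤ α) :
    tradeOff P Q α ≤ 1 - ∫ x, φ x ∂Q := by
  apply csInf_le
  · refine ⟨0, ?_⟩
    rintro β ⟨ψ, hψm, hψ01, -, rfl⟩
    have := (aux_int_mem Q hψm hψ01).2
    linarith
  · exact ⟨φ, hφ, h01, hα, rfl⟩

lemma weight_sum (n : ℕ) (p : ℝ) :
    ∑ b : Finset (Fin n), p ^ b.card * (1 - p) ^ (n - b.card) = 1 := by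
  classical
  have h1 : ∑ b : Finset (Fin n), p ^ b.card * (1 - p) ^ (n - b.card)
      = ∑ b ∈ (Finset.univ : Finset (Fin n)).powerset,
          p ^ b.card * (1 - p) ^ (n - b.card) := by
    rw [Finset.powerset_univ]
  rw [h1, Finset.sum_powerset_apply_card (fun k => p ^ k * (1 - p) ^ (n - k))]
  simp only [Finset.card_univ, Fintype.card_fin, nsmul_eq_mul]
  calc ∑ m ∈ Finset.range (n + 1), (n.choose m : ℝ) * (p ^ m * (1 - p) ^ (n - m))
      = ∑ m ∈ Finset.range (n + 1), p ^ m * (1 - p) ^ (n - m) * (n.choose m : ℝ) :=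
        Finset.sum_congr rfl fun k _ => by ring
    _ = (p + (1 - p)) ^ n := (add_pow p (1 - p) n).symm
    _ = 1 := by norm_num

lemma lift_zero_not_mem (n : ℕ) (b : Finset (Fin n)) : (0 : Fin (n + 1)) ∉ liftSubset n b := by
  intro h
  simp only [liftSubset, Finset.mem_map, Function.Embedding.coeFn_mk] at h
  obtain ⟨a, -, ha⟩ := h
  exact Fin.succ_ne_zero a ha

lemma core_ineq (n : ℕ)
    (M : Finset (Fin (n + 1)) → Measure Ω) (hM : ∀ b, IsProbabilityMeasure (M b))
    (p : ℝ) (hp : p ∈ Set.Icc (0:ℝ) 1)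
    (f : ℝ → ℝ) (hconv : ConvexOn ℝ (Set.Icc (0:ℝ) 1) f)
    (hf : ∀ b : Finset (Fin (n + 1)), (0 : Fin (n + 1)) ∉ b →
      ∀ α ∈ Set.Icc (0:ℝ) 1, f α ≤ tradeOff (M b) (M (insert 0 b)) α)
    (ψ : Ω → ℝ) (hψm : Measurable ψ) (hψ01 : ∀ x, ψ x ∈ Set.Icc (0:ℝ) 1)
    (α : ℝ)
    (hsum : ∑ b : Finset (Fin n),
      (p ^ b.card * (1 - p) ^ (n - b.card)) * ∫ x, ψ x ∂(M (liftSubset n b)) = α) :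
    p * f α + (1 - p) * (1 - α) ≤
      1 - ∑ b : Finset (Fin n), (p ^ b.card * (1 - p) ^ (n - b.card)) *
        (p * ∫ x, ψ x ∂(M (insert 0 (liftSubset n b)))
          + (1 - p) * ∫ x, ψ x ∂(M (liftSubset n b))) := by
  classical
  have hp0 := hp.1
  have hp1 := hp.2
  set w : Finset (Fin n) → ℝ := fun b => p ^ b.card * (1 - p) ^ (n - b.card) with hwdef
  have hw0 : ∀ b, 0 ≤ w b := fun b =>
    mul_nonneg (pow_nonneg hp0 _) (pow_nonneg (by linarith) _)
  have hw1 : ∑ b : Finset (Fin n), w b = 1 := weight_sum n p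
  have hA01 : ∀ b : Finset (Fin n),
      (∫ x, ψ x ∂(M (liftSubset n b))) ∈ Set.Icc (0:ℝ) 1 := fun b => by
    haveI := hM (liftSubset n b); exact aux_int_mem _ hψm hψ01
  have hB01 : ∀ b : Finset (Fin n),
      (∫ x, ψ x ∂(M (insert 0 (liftSubset n b)))) ∈ Set.Icc (0:ℝ) 1 := fun b => by
    haveI := hM (insert 0 (liftSubset n b)); exact aux_int_mem _ hψm hψ01
  have hfB : ∀ b : Finset (Fin n),
      f (∫ x, ψ x ∂(M (liftSubset n b))) ≤ 1 - ∫ x, ψ x ∂(M (insert 0 (liftSubset n b))) := by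
    intro b
    have h1 := hf (liftSubset n b) (lift_zero_not_mem n b) _ (hA01 b)
    have h2 : tradeOff (M (liftSubset n b)) (M (insert 0 (liftSubset n b)))
        (∫ x, ψ x ∂(M (liftSubset n b))) ≤ 1 - ∫ x, ψ x ∂(M (insert 0 (liftSubset n b))) := by
      haveI := hM (insert 0 (liftSubset n b))
      exact tradeOff_le _ _ hψm hψ01 le_rfl
    linarith
  -- convexity of the target function
  have hg : ConvexOn ℝ (Set.Icc (0:ℝ) 1) (fun x => p * f x + (1 - p) * (1 - x)) := by
    have h1 : ConvexOn ℝ (Set.Icc (0:ℝ) 1) (fun x => p • f x) := hconv.smul hp0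
    have h2 : ConvexOn ℝ (Set.Icc (0:ℝ) 1) (fun x : ℝ => (1 - p) * (1 - x)) := by
      refine ⟨convex_Icc 0 1, fun x _ y _ a b ha hb hab => ?_⟩
      simp only [smul_eq_mul]
      nlinarith
    have h3 := h1.add h2
    simpa only [smul_eq_mul, Pi.add_def] using h3
  have hjen := hg.map_sum_le (t := Finset.univ)
      (w := w) (p := fun b => ∫ x, ψ x ∂(M (liftSubset n b)))
      (fun b _ => hw0 b) hw1 (fun b _ => hA01 b)
  simp only [smul_eq_mul] at hjen
  rw [hsum] at hjen
  have hstep : ∑ b : Finset (Fin n),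
      w b * (p * f (∫ x, ψ x ∂(M (liftSubset n b)))
        + (1 - p) * (1 - ∫ x, ψ x ∂(M (liftSubset n b))))
      ≤ ∑ b : Finset (Fin n), w b * (1 - (p * ∫ x, ψ x ∂(M (insert 0 (liftSubset n b)))
        + (1 - p) * ∫ x, ψ x ∂(M (liftSubset n b)))) := by
    refine Finset.sum_le_sum fun b _ => mul_le_mul_of_nonneg_left ?_ (hw0 b)
    have h1 := mul_le_mul_of_nonneg_left (hfB b) hp0
    linarith
  have hsplit : ∑ b : Finset (Fin n),
      w b * (1 - (p * ∫ x, ψ x ∂(M (insert 0 (liftSubset n b)))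
        + (1 - p) * ∫ x, ψ x ∂(M (liftSubset n b))))
      = 1 - ∑ b : Finset (Fin n), w b * (p * ∫ x, ψ x ∂(M (insert 0 (liftSubset n b)))
        + (1 - p) * ∫ x, ψ x ∂(M (liftSubset n b))) := by
    simp only [mul_sub, mul_one]
    rw [Finset.sum_sub_distrib, hw1]
  linarith

end Aux

theorem stmt_1 {Ω : Type*} [MeasurableSpace Ω] (n : ℕ) (hn : 1 ≤ n)
    (M : Finset (Fin (n + 1)) → Measure Ω) (hM : ∀ b, IsProbabilityMeasure (M b))
    (p : ℝ) (hp : p ∈ Set.Icc (0:ℝ) 1)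
    (f : ℝ → ℝ) (hconv : ConvexOn ℝ (Set.Icc (0:ℝ) 1) f)
    (hrange : ∀ α ∈ Set.Icc (0:ℝ) 1, f α ∈ Set.Icc (0:ℝ) 1)
    (hf : ∀ b : Finset (Fin (n + 1)), (0 : Fin (n + 1)) ∉ b →
      ∀ α ∈ Set.Icc (0:ℝ) 1, f α ≤ tradeOff (M b) (M (insert 0 b)) α) :
    ∀ α ∈ Set.Icc (0:ℝ) 1,
      p * f α + (1 - p) * (1 - α) ≤
        tradeOff
          (∑ b : Finset (Fin n),
            ENNReal.ofReal (p ^ b.card * (1 - p) ^ (n - b.card)) • M (liftSubset n b))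
          (∑ b : Finset (Fin n),
            ENNReal.ofReal (p ^ b.card * (1 - p) ^ (n - b.card)) •
              (ENNReal.ofReal p • M (insert 0 (liftSubset n b))
                + ENNReal.ofReal (1 - p) • M (liftSubset n b))) α := by
  intro α hα
  classical
  have hp0 := hp.1
  have hp1 := hp.2
  set w : Finset (Fin n) → ℝ := fun b => p ^ b.card * (1 - p) ^ (n - b.card) with hwdef
  have hw0 : ∀ b, 0 ≤ w b := fun b =>
    mul_nonneg (pow_nonneg hp0 _) (pow_nonneg (by linarith) _)
  have hw1 : ∑ b : Finset (Fin n), w b = 1 := weight_sum n p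
  -- integral decompositions
  have hPint : ∀ (φ : Ω → ℝ), Measurable φ → (∀ x, φ x ∈ Set.Icc (0:ℝ) 1) →
      ∫ x, φ x ∂(∑ b : Finset (Fin n), ENNReal.ofReal (w b) • M (liftSubset n b))
        = ∑ b : Finset (Fin n), w b * ∫ x, φ x ∂(M (liftSubset n b)) := by
    intro φ hφm hφ01
    have hint : ∀ b ∈ (Finset.univ : Finset (Finset (Fin n))),
        Integrable φ (ENNReal.ofReal (w b) • M (liftSubset n b)) := fun b _ => by
      haveI := hM (liftSubset n b)
      exact (aux_integrable _ hφm hφ01).smul_measure ENNReal.ofReal_ne_top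
    rw [integral_finset_sum_measure hint]
    exact Finset.sum_congr rfl fun b _ => by
      rw [integral_smul_measure, ENNReal.toReal_ofReal (hw0 b), smul_eq_mul]
  have hQint : ∀ (φ : Ω → ℝ), Measurable φ → (∀ x, φ x ∈ Set.Icc (0:ℝ) 1) →
      ∫ x, φ x ∂(∑ b : Finset (Fin n), ENNReal.ofReal (w b) •
          (ENNReal.ofReal p • M (insert 0 (liftSubset n b))
            + ENNReal.ofReal (1 - p) • M (liftSubset n b)))
        = ∑ b : Finset (Fin n), w b * (p * ∫ x, φ x ∂(M (insert 0 (liftSubset n b)))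
            + (1 - p) * ∫ x, φ x ∂(M (liftSubset n b))) := by
    intro φ hφm hφ01
    have hi1 : ∀ b : Finset (Fin n),
        Integrable φ (ENNReal.ofReal p • M (insert 0 (liftSubset n b))) := fun b => by
      haveI := hM (insert 0 (liftSubset n b))
      exact (aux_integrable _ hφm hφ01).smul_measure ENNReal.ofReal_ne_top
    have hi2 : ∀ b : Finset (Fin n),
        Integrable φ (ENNReal.ofReal (1 - p) • M (liftSubset n b)) := fun b => by
      haveI := hM (liftSubset n b)
      exact (aux_integrable _ hφm hφ01).smul_measure ENNReal.ofReal_ne_top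
    have hint : ∀ b ∈ (Finset.univ : Finset (Finset (Fin n))),
        Integrable φ (ENNReal.ofReal (w b) •
          (ENNReal.ofReal p • M (insert 0 (liftSubset n b))
            + ENNReal.ofReal (1 - p) • M (liftSubset n b))) := fun b _ =>
      ((hi1 b).add_measure (hi2 b)).smul_measure ENNReal.ofReal_ne_top
    rw [integral_finset_sum_measure hint]
    refine Finset.sum_congr rfl fun b _ => ?_
    rw [integral_smul_measure, integral_add_measure (hi1 b) (hi2 b),
      integral_smul_measure, integral_smul_measure,
      ENNReal.toReal_ofReal (hw0 b), ENNReal.toReal_ofReal hp0,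
      ENNReal.toReal_ofReal (by linarith : (0:ℝ) ≤ 1 - p)]
    simp only [smul_eq_mul]
  -- the trade-off set is nonempty
  rw [tradeOff]
  refine le_csInf ⟨_, ⟨fun _ => (0:ℝ), measurable_const, fun x => ⟨le_refl 0, zero_le_one⟩,
    ?_, rfl⟩⟩ ?_
  · simpa using hα.1
  rintro β ⟨φ, hφm, hφ01, hφle, rfl⟩
  rw [hQint φ hφm hφ01]
  rw [hPint φ hφm hφ01] at hφle
  set α₀ := ∑ b : Finset (Fin n), w b * ∫ x, φ x ∂(M (liftSubset n b)) with hα₀def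
  have hA01 : ∀ b : Finset (Fin n),
      (∫ x, φ x ∂(M (liftSubset n b))) ∈ Set.Icc (0:ℝ) 1 := fun b => by
    haveI := hM (liftSubset n b); exact aux_int_mem _ hφm hφ01
  have hB01 : ∀ b : Finset (Fin n),
      (∫ x, φ x ∂(M (insert 0 (liftSubset n b)))) ∈ Set.Icc (0:ℝ) 1 := fun b => by
    haveI := hM (insert 0 (liftSubset n b)); exact aux_int_mem _ hφm hφ01
  have hα₀0 : 0 ≤ α₀ := Finset.sum_nonneg fun b _ => mul_nonneg (hw0 b) (hA01 b).1
  have hα₀1 : α₀ ≤ 1 := by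
    calc α₀ ≤ ∑ b : Finset (Fin n), w b * 1 :=
        Finset.sum_le_sum fun b _ => mul_le_mul_of_nonneg_left (hA01 b).2 (hw0 b)
      _ = 1 := by simpa using hw1
  set t := (α - α₀) / (1 - α₀) with htdef
  have ht0 : 0 ≤ t := div_nonneg (by linarith) (by linarith)
  have ht1 : t ≤ 1 := div_le_one_of_le₀ (by linarith [hα.2]) (by linarith)
  set ψ : Ω → ℝ := fun x => (1 - t) * φ x + t with hψdef
  have hψm : Measurable ψ := (hφm.const_mul _).add_const t
  have hψ01 : ∀ x, ψ x ∈ Set.Icc (0:ℝ) 1 := fun x => by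
    have h := hφ01 x
    constructor
    · have h2 : 0 ≤ (1 - t) * φ x := mul_nonneg (by linarith) h.1
      simp only [hψdef]
      linarith
    · simp only [hψdef]
      nlinarith [h.2]
  have hψint : ∀ c : Finset (Fin (n + 1)),
      ∫ x, ψ x ∂(M c) = (1 - t) * ∫ x, φ x ∂(M c) + t := fun c => by
    haveI := hM c
    simp only [hψdef]
    rw [integral_add ((aux_integrable _ hφm hφ01).const_mul _) (integrable_const _),
      integral_const_mul, integral_const]
    simp [measure_univ]
  have hval : (1 - t) * α₀ + t = α := by
    rcases lt_or_eq_of_le hα₀1 with h | h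
    · have h0 : 1 - α₀ ≠ 0 := by linarith
      have h2 : t * (1 - α₀) = α - α₀ := div_mul_cancel₀ _ h0
      nlinarith [h2]
    · have hα1 : α = 1 := le_antisymm hα.2 (by linarith)
      have ht : t = 0 := by rw [htdef, ← h]; simp
      rw [ht]; linarith
  have hsumψ : ∑ b : Finset (Fin n), w b * ∫ x, ψ x ∂(M (liftSubset n b)) = α := by
    calc ∑ b : Finset (Fin n), w b * ∫ x, ψ x ∂(M (liftSubset n b))
        = ∑ b : Finset (Fin n),
            ((1 - t) * (w b * ∫ x, φ x ∂(M (liftSubset n b))) + t * w b) := by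
          refine Finset.sum_congr rfl fun b _ => ?_
          rw [hψint]; ring
      _ = (1 - t) * α₀ + t := by
          rw [Finset.sum_add_distrib, ← Finset.mul_sum, ← Finset.mul_sum, hw1, ← hα₀def]
          ring
      _ = α := hval
  have hkey := core_ineq n M hM p hp f hconv hf ψ hψm hψ01 α hsumψ
  have hmono : ∑ b : Finset (Fin n), w b * (p * ∫ x, φ x ∂(M (insert 0 (liftSubset n b)))
        + (1 - p) * ∫ x, φ x ∂(M (liftSubset n b)))
      ≤ ∑ b : Finset (Fin n), w b * (p * ∫ x, ψ x ∂(M (insert 0 (liftSubset n b)))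
        + (1 - p) * ∫ x, ψ x ∂(M (liftSubset n b))) := by
    refine Finset.sum_le_sum fun b _ => mul_le_mul_of_nonneg_left ?_ (hw0 b)
    have hA := hA01 b
    have hB := hB01 b
    rw [hψint, hψint]
    have h1 : 0 ≤ p * t * (1 - ∫ x, φ x ∂(M (insert 0 (liftSubset n b)))) :=
      mul_nonneg (mul_nonneg hp0 ht0) (by linarith [hB.2])
    have h2 : 0 ≤ (1 - p) * t * (1 - ∫ x, φ x ∂(M (liftSubset n b))) :=
      mul_nonneg (mul_nonneg (by linarith) ht0) (by linarith [hA.2])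
    nlinarith [h1, h2]
  linarith
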